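/- If all agents submit valid rankings, then the true agent-optimal stable matching m̄ is stable with respect to the submitted rankings (together with the arms' true rankings). -/
import Mathlib


/-- `(i, j)` is a blocking pair for matching `m`: arm `j` is not `i`'s match,
agent `i` prefers `j` to their match, and arm `j` is unmatched or prefers `i`
(a smaller `armRank` value means a better rank). -/
def BlockingPair {N K : ℕ} (pref : Fin N → Fin K → Fin K → Prop)
    (armRank : Fin K → Fin N → ℕ) (m : Fin N → Fin K) (i : Fin N) (j : Fin K) : Prop :=
  m i ≠ j ∧ pref i j (m i) ∧
    ((∀ i', m i' ≠ j) ∨ ∃ i', m i' = j ∧ armRank j i < armRank j i')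

/-- A matching (injective assignment of agents to arms) is stable iff it has no blocking pair. -/
def IsStableMatching {N K : ℕ} (pref : Fin N → Fin K → Fin K → Prop)
    (armRank : Fin K → Fin N → ℕ) (m : Fin N → Fin K) : Prop :=
  Function.Injective m ∧ ∀ i j, ¬ BlockingPair pref armRank m i j

/-- Agents' true preferences, induced by mean rewards. -/
def truePref {N K : ℕ} (μ : Fin N → Fin K → ℝ) : Fin N → Fin K → Fin K → Prop :=
  fun i j j' => μ i j' < μ i j

/-- if all agents submit valid rankings, the true agent-optimal stable matching
`mbar` is stable with respect to the submitted rankings (and the arms' true rankings). -/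
theorem mbar_stable_for_valid_rankings
    (N K : ℕ) (hNK : N ≤ K)
    (μ : Fin N → Fin K → ℝ) (armRank : Fin K → Fin N → ℕ)
    (harmRank : ∀ j, Function.Injective (armRank j))
    (hdistinct : ∀ i, Function.Injective (μ i))
    (mbar : Fin N → Fin K)
    (hbarStable : IsStableMatching (truePref μ) armRank mbar)
    (hbarOpt : ∀ m', IsStableMatching (truePref μ) armRank m' →
      ∀ i, μ i (m' i) ≤ μ i (mbar i))
    (r : Fin N → Fin K → ℕ)
    (hrInj : ∀ i, Function.Injective (r i))
    (hvalid : ∀ i j, r i j < r i (mbar i) → μ i (mbar i) < μ i j) :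
    IsStableMatching (fun i j j' => r i j < r i j') armRank mbar := by
  refine ⟨hbarStable.1, fun i j hb => ?_⟩
  exact hbarStable.2 i j ⟨hb.1, hvalid i j hb.2.1, hb.2.2⟩
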